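/- Let m, n be natural numbers and G an arbitrary m×n complex matrix. Define G_ex = [G , J_m · conj(G) · J_n] ∈ ℂ^{m×2n}. Then every entry of the matrix G_re = Q_mᴴ · G_ex · Q_{2n} is real (has zero imaginary part), where Q_s denotes the unitary matrix defined by Q_{2k} = (1/√2)·[[I_k, i·I_k],[J_k, −i·J_k]] if s = 2k is even, and Q_{2k+1} = (1/√2)·[[I_k, 0, i·I_k],[0, √2, 0],[J_k, 0, −i·J_k]] if s = 2k+1 is odd. (This is the claim of Eqs. (49)–(50): the transformed 3-D matrix pencil matrix G_re(t) is a real matrix, which reduces computational complexity without losing accuracy.) -/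

import Mathlib

open Matrix

def Jmat (k : ℕ) : Matrix (Fin k) (Fin k) ℂ :=
  Matrix.of fun a b => if (a : ℕ) + (b : ℕ) = k - 1 then 1 else 0

/-- The even-size unitary transformation matrix of Eq. (51):
`Q_{2k} = (1/√2) · [[I_k, i·I_k], [J_k, −i·J_k]]`. -/
noncomputable def Qeven (k : ℕ) : Matrix (Fin (2 * k)) (Fin (2 * k)) ℂ :=
  ((Real.sqrt 2 : ℂ))⁻¹ •
    (Matrix.reindex (finSumFinEquiv.trans (finCongr (two_mul k).symm))
      (finSumFinEquiv.trans (finCongr (two_mul k).symm))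
      (Matrix.fromBlocks (1 : Matrix (Fin k) (Fin k) ℂ)
        (Complex.I • (1 : Matrix (Fin k) (Fin k) ℂ))
        (Jmat k) ((-Complex.I) • Jmat k)))

/-- Index identification for the 3×3 block structure of the odd-size matrix. -/
def oddIndexEquiv (k : ℕ) : (Fin k ⊕ (Fin 1 ⊕ Fin k)) ≃ Fin (2 * k + 1) :=
  ((Equiv.refl (Fin k)).sumCongr finSumFinEquiv).trans
    (finSumFinEquiv.trans (finCongr (by omega)))

/-- The odd-size unitary transformation matrix of Eq. (52):
`Q_{2k+1} = (1/√2) · [[I_k, 0, i·I_k], [0, √2, 0], [J_k, 0, −i·J_k]]`. -/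
noncomputable def Qodd (k : ℕ) : Matrix (Fin (2 * k + 1)) (Fin (2 * k + 1)) ℂ :=
  ((Real.sqrt 2 : ℂ))⁻¹ •
    (Matrix.reindex (oddIndexEquiv k) (oddIndexEquiv k)
      (Matrix.fromBlocks (1 : Matrix (Fin k) (Fin k) ℂ)
        (Matrix.fromCols (0 : Matrix (Fin k) (Fin 1) ℂ)
          (Complex.I • (1 : Matrix (Fin k) (Fin k) ℂ)))
        (Matrix.fromRows (0 : Matrix (Fin 1) (Fin k) ℂ) (Jmat k))
        (Matrix.fromBlocks ((Real.sqrt 2 : ℂ) • (1 : Matrix (Fin 1) (Fin 1) ℂ)) 0 0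
          ((-Complex.I) • Jmat k))))

/-- The size-s unitary transformation matrix `Q_s` of the unitary matrix pencil
method, defined as `Qeven (s/2)` for even `s` and `Qodd (s/2)` for odd `s`. -/
noncomputable def Qmat (s : ℕ) : Matrix (Fin s) (Fin s) ℂ :=
  if h : s % 2 = 0 then
    Matrix.reindex (finCongr (by omega : 2 * (s / 2) = s))
      (finCongr (by omega : 2 * (s / 2) = s)) (Qeven (s / 2))
  else
    Matrix.reindex (finCongr (by omega : 2 * (s / 2) + 1 = s))
      (finCongr (by omega : 2 * (s / 2) + 1 = s)) (Qodd (s / 2))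

/-! ### Auxiliary lemmas -/

lemma Jmat_transpose (k : ℕ) : (Jmat k)ᵀ = Jmat k := by
  ext a b
  simp only [Jmat, transpose_apply, of_apply]
  exact if_congr (by omega) rfl rfl

lemma Jmat_map_star (k : ℕ) : (Jmat k).map (starRingEnd ℂ) = Jmat k := by
  ext a b
  simp [Jmat, apply_ite (starRingEnd ℂ)]

lemma Jmat_mul_Jmat (k : ℕ) : Jmat k * Jmat k = 1 := by
  ext a b
  have ha := a.isLt
  have hb := b.isLt
  simp only [mul_apply, Jmat, of_apply]
  rw [Finset.sum_eq_single (Fin.rev a)]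
  · rw [Fin.val_rev, if_pos (by omega)]
    rcases eq_or_ne a b with rfl | h
    · rw [if_pos (by omega), one_mul, one_apply_eq]
    · rw [if_neg (fun hh => h (Fin.ext (by omega))), mul_zero, eq_comm]
      exact one_apply_ne h
  · intro c _ hc
    rw [if_neg, zero_mul]
    intro hh
    exact hc (Fin.ext (by rw [Fin.val_rev]; omega))
  · simp

lemma map_smul_star {m n : Type*} (c : ℂ) (M : Matrix m n ℂ) :
    (c • M).map (starRingEnd ℂ) = (starRingEnd ℂ c) • M.map (starRingEnd ℂ) := by
  ext i j; simp

lemma map_neg_star {m n : Type*} (M : Matrix m n ℂ) :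
    (-M).map (starRingEnd ℂ) = -(M.map (starRingEnd ℂ)) := by
  ext i j; simp

lemma star_sqrt2_inv : (starRingEnd ℂ) ((Real.sqrt 2 : ℂ))⁻¹ = ((Real.sqrt 2 : ℂ))⁻¹ := by
  rw [map_inv₀, Complex.conj_ofReal]

lemma reindex_mul_reindex {m n p m' n' p' : Type*} [Fintype n] [Fintype n']
    [DecidableEq n] [DecidableEq n']
    (em : m ≃ m') (en : n ≃ n') (ep : p ≃ p') (A : Matrix m n ℂ) (B : Matrix n p ℂ) :
    Matrix.reindex em en A * Matrix.reindex en ep B = Matrix.reindex em ep (A * B) := by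
  simp only [reindex_apply]
  exact submatrix_mul_equiv A B _ en.symm _

lemma reindex_map {m n m' n' : Type*} (em : m ≃ m') (en : n ≃ n')
    (A : Matrix m n ℂ) (f : ℂ → ℂ) :
    (Matrix.reindex em en A).map f = Matrix.reindex em en (A.map f) := by
  simp only [reindex_apply, submatrix_map]

lemma fromColumns_map {m n₁ n₂ : Type*} (A : Matrix m n₁ ℂ) (B : Matrix m n₂ ℂ) (f : ℂ → ℂ) :
    (Matrix.fromCols A B).map f = Matrix.fromCols (A.map f) (B.map f) := by
  ext i (j | j) <;> simp

lemma fromRows_map {m₁ m₂ n : Type*} (A : Matrix m₁ n ℂ) (B : Matrix m₂ n ℂ) (f : ℂ → ℂ) :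
    (Matrix.fromRows A B).map f = Matrix.fromRows (A.map f) (B.map f) := by
  ext (i | i) j <;> simp

lemma mul_submatrix_right {m n p p' : Type*} [Fintype n] (A : Matrix m n ℂ)
    (B : Matrix n p ℂ) (ep : p' → p) :
    A * B.submatrix id ep = (A * B).submatrix id ep := by
  ext i j; simp [mul_apply, submatrix_apply]

lemma evenEquiv_val_left (k : ℕ) (i : Fin k) :
    (((finSumFinEquiv.trans (finCongr (two_mul k).symm)) (Sum.inl i)) : ℕ) = i := by
  simp

lemma evenEquiv_val_right (k : ℕ) (i : Fin k) :
    (((finSumFinEquiv.trans (finCongr (two_mul k).symm)) (Sum.inr i)) : ℕ) = k + i := by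
  simp [add_comm]

lemma oddEquiv_val_left (k : ℕ) (i : Fin k) :
    ((oddIndexEquiv k (Sum.inl i)) : ℕ) = i := by
  simp [oddIndexEquiv]

lemma oddEquiv_val_mid (k : ℕ) (i : Fin 1) :
    ((oddIndexEquiv k (Sum.inr (Sum.inl i))) : ℕ) = k := by
  simp [oddIndexEquiv]

lemma oddEquiv_val_right (k : ℕ) (i : Fin k) :
    ((oddIndexEquiv k (Sum.inr (Sum.inr i))) : ℕ) = k + 1 + i := by
  simp [oddIndexEquiv]
  omega

lemma JmatEven (k : ℕ) :
    Jmat (2 * k) = Matrix.reindex (finSumFinEquiv.trans (finCongr (two_mul k).symm))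
      (finSumFinEquiv.trans (finCongr (two_mul k).symm))
      (Matrix.fromBlocks 0 (Jmat k) (Jmat k) 0) := by
  set e := finSumFinEquiv.trans (finCongr (two_mul k).symm) with he
  ext a b
  obtain ⟨i, rfl⟩ : ∃ i, e i = a := ⟨e.symm a, by simp⟩
  obtain ⟨j, rfl⟩ : ∃ j, e j = b := ⟨e.symm b, by simp⟩
  rw [reindex_apply, submatrix_apply, Equiv.symm_apply_apply, Equiv.symm_apply_apply]
  rcases i with i | i <;> rcases j with j | j <;>
    have hi := i.isLt <;> have hj := j.isLt <;>
    simp only [Jmat, of_apply, fromBlocks_apply₁₁, fromBlocks_apply₁₂, fromBlocks_apply₂₁,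
      fromBlocks_apply₂₂, he, evenEquiv_val_left, evenEquiv_val_right, Matrix.zero_apply]
  · rw [if_neg (by omega)]
  · exact if_congr (by omega) rfl rfl
  · exact if_congr (by omega) rfl rfl
  · rw [if_neg (by omega)]

lemma JmatOdd (k : ℕ) :
    Jmat (2 * k + 1) = Matrix.reindex (oddIndexEquiv k) (oddIndexEquiv k)
      (Matrix.fromBlocks 0
        (Matrix.fromCols (0 : Matrix (Fin k) (Fin 1) ℂ) (Jmat k))
        (Matrix.fromRows (0 : Matrix (Fin 1) (Fin k) ℂ) (Jmat k))
        (Matrix.fromBlocks (1 : Matrix (Fin 1) (Fin 1) ℂ) 0 0 0)) := by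
  set e := oddIndexEquiv k with he
  ext a b
  obtain ⟨i, rfl⟩ : ∃ i, e i = a := ⟨e.symm a, by simp⟩
  obtain ⟨j, rfl⟩ : ∃ j, e j = b := ⟨e.symm b, by simp⟩
  rw [reindex_apply, submatrix_apply, Equiv.symm_apply_apply, Equiv.symm_apply_apply]
  rcases i with i | i | i <;> rcases j with j | j | j <;>
    (try have hi := i.isLt) <;> (try have hj := j.isLt) <;>
    simp only [Jmat, of_apply, fromBlocks_apply₁₁, fromBlocks_apply₁₂, fromBlocks_apply₂₁,
      fromBlocks_apply₂₂, fromCols_apply_inl, fromCols_apply_inr, fromRows_apply_inl,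
      fromRows_apply_inr, he, oddEquiv_val_left, oddEquiv_val_mid, oddEquiv_val_right,
      Matrix.zero_apply]
  · rw [if_neg (by omega)]
  · rw [if_neg (by omega)]
  · exact if_congr (by omega) rfl rfl
  · rw [if_neg (by omega)]
  · rw [if_pos (by omega), Subsingleton.elim i j, one_apply_eq]
  · rw [if_neg (by omega)]
  · exact if_congr (by omega) rfl rfl
  · rw [if_neg (by omega)]
  · rw [if_neg (by omega)]

lemma evenBlockEq (k : ℕ) :
    (Matrix.fromBlocks (1 : Matrix (Fin k) (Fin k) ℂ)
        (Complex.I • (1 : Matrix (Fin k) (Fin k) ℂ))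
        (Jmat k) ((-Complex.I) • Jmat k)).map (starRingEnd ℂ) =
    Matrix.fromBlocks 0 (Jmat k) (Jmat k) 0 *
      Matrix.fromBlocks (1 : Matrix (Fin k) (Fin k) ℂ)
        (Complex.I • (1 : Matrix (Fin k) (Fin k) ℂ))
        (Jmat k) ((-Complex.I) • Jmat k) := by
  rw [fromBlocks_map, fromBlocks_multiply]
  simp [Matrix.mul_smul, Jmat_mul_Jmat, Jmat_map_star, map_smul_star, map_neg_star,
    Matrix.map_one (starRingEnd ℂ) (map_zero _) (map_one _)]

lemma oddBlockEq (k : ℕ) :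
    (Matrix.fromBlocks (1 : Matrix (Fin k) (Fin k) ℂ)
        (Matrix.fromCols (0 : Matrix (Fin k) (Fin 1) ℂ)
          (Complex.I • (1 : Matrix (Fin k) (Fin k) ℂ)))
        (Matrix.fromRows (0 : Matrix (Fin 1) (Fin k) ℂ) (Jmat k))
        (Matrix.fromBlocks ((Real.sqrt 2 : ℂ) • (1 : Matrix (Fin 1) (Fin 1) ℂ)) 0 0
          ((-Complex.I) • Jmat k))).map (starRingEnd ℂ) =
    Matrix.fromBlocks 0
        (Matrix.fromCols (0 : Matrix (Fin k) (Fin 1) ℂ) (Jmat k))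
        (Matrix.fromRows (0 : Matrix (Fin 1) (Fin k) ℂ) (Jmat k))
        (Matrix.fromBlocks (1 : Matrix (Fin 1) (Fin 1) ℂ) 0 0 0) *
      Matrix.fromBlocks (1 : Matrix (Fin k) (Fin k) ℂ)
        (Matrix.fromCols (0 : Matrix (Fin k) (Fin 1) ℂ)
          (Complex.I • (1 : Matrix (Fin k) (Fin k) ℂ)))
        (Matrix.fromRows (0 : Matrix (Fin 1) (Fin k) ℂ) (Jmat k))
        (Matrix.fromBlocks ((Real.sqrt 2 : ℂ) • (1 : Matrix (Fin 1) (Fin 1) ℂ)) 0 0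
          ((-Complex.I) • Jmat k)) := by
  rw [fromBlocks_multiply, fromBlocks_map, fromColumns_map, _root_.fromRows_map, fromBlocks_map,
    fromCols_mul_fromRows, fromCols_mul_fromBlocks, fromBlocks_mul_fromRows,
    fromRows_mul_fromCols, fromBlocks_multiply]
  simp [Matrix.mul_smul, Jmat_mul_Jmat, Jmat_map_star, map_smul_star, map_neg_star,
    Matrix.map_one (starRingEnd ℂ) (map_zero _) (map_one _), Complex.conj_ofReal]
  rw [Matrix.fromBlocks_add]
  ext (i | i) (j | j) <;>
    simp [Complex.conj_ofReal, Matrix.one_apply, apply_ite (starRingEnd ℂ)]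

lemma conj_Qeven (k : ℕ) :
    (Qeven k).map (starRingEnd ℂ) = Jmat (2 * k) * Qeven k := by
  rw [Qeven, map_smul_star, star_sqrt2_inv, reindex_map, evenBlockEq, JmatEven,
    Matrix.mul_smul, reindex_mul_reindex]

lemma conj_Qodd (k : ℕ) :
    (Qodd k).map (starRingEnd ℂ) = Jmat (2 * k + 1) * Qodd k := by
  rw [Qodd, map_smul_star, star_sqrt2_inv, reindex_map, oddBlockEq, JmatOdd,
    Matrix.mul_smul, reindex_mul_reindex]

lemma conj_reindexed {t s : ℕ} (h : t = s) (M : Matrix (Fin t) (Fin t) ℂ)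
    (hM : M.map (starRingEnd ℂ) = Jmat t * M) :
    (Matrix.reindex (finCongr h) (finCongr h) M).map (starRingEnd ℂ) =
      Jmat s * Matrix.reindex (finCongr h) (finCongr h) M := by
  subst h
  simpa using hM

lemma conj_Qmat (s : ℕ) :
    (Qmat s).map (starRingEnd ℂ) = Jmat s * Qmat s := by
  rw [Qmat]
  split_ifs with h
  · exact conj_reindexed _ _ (conj_Qeven _)
  · exact conj_reindexed _ _ (conj_Qodd _)

/-- **Eqs. (49)–(50): the transformed matrix `G_re = Q_mᴴ · G_ex · Q_{2n}` is real.**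
For an arbitrary m×n complex matrix `G`, with `G_ex = [G , J_m · conj(G) · J_n]`,
every entry of `Q_mᴴ · G_ex · Q_{2n}` has zero imaginary part. -/
theorem Gre_real (m n : ℕ) (G : Matrix (Fin m) (Fin n) ℂ)
    (Gex : Matrix (Fin m) (Fin (2 * n)) ℂ)
    (hGex : Gex = Matrix.reindex (Equiv.refl (Fin m))
      (finSumFinEquiv.trans (finCongr (two_mul n).symm))
      (Matrix.fromCols G (Jmat m * G.map (starRingEnd ℂ) * Jmat n))) :
    ∀ (a : Fin m) (b : Fin (2 * n)),
      (((Qmat m)ᴴ * Gex * Qmat (2 * n)) a b).im = 0 := by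
  -- conjugation symmetry of Gex
  set e := finSumFinEquiv.trans (finCongr (two_mul n).symm) with he
  have hGG : (G.map (starRingEnd ℂ)).map (starRingEnd ℂ) = G := by
    ext i j; simp
  have hconjGex : Gex.map (starRingEnd ℂ) = Jmat m * Gex * Jmat (2 * n) := by
    subst hGex
    rw [reindex_map, fromColumns_map, Matrix.map_mul, Matrix.map_mul, hGG,
      Jmat_map_star, Jmat_map_star]
    have hre : ∀ (M : Matrix (Fin m) (Fin (2 * n)) ℂ),
        Matrix.reindex (Equiv.refl (Fin m)) e
          (Matrix.fromCols G (Jmat m * G.map (starRingEnd ℂ) * Jmat n)) = M → True :=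
      fun _ _ => trivial
    -- rewrite the reindex as a column submatrix
    have hsub : ∀ (C : Matrix (Fin m) (Fin n ⊕ Fin n) ℂ),
        Matrix.reindex (Equiv.refl (Fin m)) e C = C.submatrix id ⇑e.symm := by
      intro C
      rw [reindex_apply]
      congr
    rw [hsub, hsub, JmatEven n, reindex_apply, mul_submatrix_right]
    have := submatrix_mul_equiv
      (Jmat m * Matrix.fromCols G (Jmat m * G.map (starRingEnd ℂ) * Jmat n))
      (Matrix.fromBlocks 0 (Jmat n) (Jmat n) 0) (id : Fin m → Fin m) e.symm ⇑e.symm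
    rw [this]
    have hA : Jmat m * (Jmat m * G.map (starRingEnd ℂ) * Jmat n) * Jmat n
        = G.map (starRingEnd ℂ) := by
      simp only [← Matrix.mul_assoc]
      rw [Jmat_mul_Jmat, Matrix.one_mul, Matrix.mul_assoc, Jmat_mul_Jmat, Matrix.mul_one]
    simp only [Matrix.mul_fromCols, Matrix.fromCols_mul_fromBlocks, Matrix.mul_zero,
      zero_add, add_zero, hA, ← Matrix.mul_assoc]
    rw [Jmat_mul_Jmat, Matrix.one_mul,
      Matrix.mul_assoc (G.map (starRingEnd ℂ)) (Jmat n) (Jmat n), Jmat_mul_Jmat,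
      Matrix.mul_one]
  -- conjugation symmetry of the full product
  have hQmH : ((Qmat m)ᴴ).map (starRingEnd ℂ) = (Qmat m)ᵀ := by
    ext i j; simp [conjTranspose_apply]
  have hQT : (Qmat m)ᵀ * Jmat m = (Qmat m)ᴴ := by
    have h1 : (Qmat m)ᴴ = ((Qmat m).map (starRingEnd ℂ))ᵀ := by
      ext i j; simp [conjTranspose_apply]
    rw [h1, conj_Qmat, Matrix.transpose_mul, Jmat_transpose]
  have key : ((Qmat m)ᴴ * Gex * Qmat (2 * n)).map (starRingEnd ℂ) =
      (Qmat m)ᴴ * Gex * Qmat (2 * n) := by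
    rw [Matrix.map_mul, Matrix.map_mul, hQmH, hconjGex, conj_Qmat]
    calc (Qmat m)ᵀ * (Jmat m * Gex * Jmat (2 * n)) * (Jmat (2 * n) * Qmat (2 * n))
        = ((Qmat m)ᵀ * Jmat m) * Gex * (Jmat (2 * n) * Jmat (2 * n)) * Qmat (2 * n) := by
          simp only [Matrix.mul_assoc]
      _ = (Qmat m)ᴴ * Gex * Qmat (2 * n) := by
          rw [Jmat_mul_Jmat, Matrix.mul_one, hQT]
  intro a b
  have hab : (starRingEnd ℂ) (((Qmat m)ᴴ * Gex * Qmat (2 * n)) a b) =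
      ((Qmat m)ᴴ * Gex * Qmat (2 * n)) a b := congrFun (congrFun key a) b
  exact Complex.conj_eq_iff_im.mp hab
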